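/- Assume in addition (Assumption (H5)): 4·‖H₁₁‖_∞ · ‖H₂₂ − ρ_b·H̄₂₂ − H₃₃H₁₃² − H₄₄H₁₄²‖_∞ ≤ ‖2H₂₁ + H₁₃² + H₁₄²‖_∞² < 4/T², where ‖·‖_∞ denotes the supremum norm over [0, T]. Then the blow-up time at ρ_b satisfies t^k_{ρ_b} < 0, so the solution k_·(ρ_b) exists on all of [0, T]; and for every ρ ∈ (0, ρ_b], the solution k_·(ρ) exists on all of [0, T] and satisfies 0 ≤ k_t(ρ) ≤ k_t(ρ_b) for all t ∈ [0, T]. -/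

import Mathlib

open Filter Set Topology


/-- Generic one-sided comparison for Riccati-type differential inequalities. -/
lemma riccati_comp {a b : ℝ} {f B f' B' p q r : ℝ → ℝ}
    (hf : ContinuousOn f (Icc a b)) (hB : ContinuousOn B (Icc a b))
    (hp : ContinuousOn p (Icc a b)) (hq : ContinuousOn q (Icc a b))
    (hfd : ∀ x ∈ Ico a b, HasDerivWithinAt f (f' x) (Ici x) x)
    (hBd : ∀ x ∈ Ico a b, HasDerivWithinAt B (B' x) (Ici x) x)
    (hfle : ∀ x ∈ Ico a b, f' x ≤ p x * f x + r x + q x * f x ^ 2)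
    (hBge : ∀ x ∈ Ico a b, p x * B x + r x + q x * B x ^ 2 ≤ B' x)
    (hab : f a ≤ B a) : ∀ x ∈ Icc a b, f x ≤ B x := by
  obtain ⟨Cf, hCf⟩ := isCompact_Icc.exists_bound_of_continuousOn hf
  obtain ⟨CB, hCB⟩ := isCompact_Icc.exists_bound_of_continuousOn hB
  obtain ⟨Cp, hCp⟩ := isCompact_Icc.exists_bound_of_continuousOn hp
  obtain ⟨Cq, hCq⟩ := isCompact_Icc.exists_bound_of_continuousOn hq
  set R0 : ℝ := |Cf| + |CB| + |Cp| + |Cq| with hR0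
  have hR0n : 0 ≤ R0 := by positivity
  have hRf : ∀ x ∈ Icc a b, |f x| ≤ R0 := by
    intro x hx
    have h1 := hCf x hx
    rw [Real.norm_eq_abs] at h1
    have := le_abs_self Cf
    have := abs_nonneg CB; have := abs_nonneg Cp; have := abs_nonneg Cq
    simp only [hR0]; linarith
  have hRB : ∀ x ∈ Icc a b, |B x| ≤ R0 := by
    intro x hx
    have h1 := hCB x hx
    rw [Real.norm_eq_abs] at h1
    have := le_abs_self CB
    have := abs_nonneg Cf; have := abs_nonneg Cp; have := abs_nonneg Cq
    simp only [hR0]; linarith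
  have hRp : ∀ x ∈ Icc a b, |p x| ≤ R0 := by
    intro x hx
    have h1 := hCp x hx
    rw [Real.norm_eq_abs] at h1
    have := le_abs_self Cp
    have := abs_nonneg Cf; have := abs_nonneg CB; have := abs_nonneg Cq
    simp only [hR0]; linarith
  have hRq : ∀ x ∈ Icc a b, |q x| ≤ R0 := by
    intro x hx
    have h1 := hCq x hx
    rw [Real.norm_eq_abs] at h1
    have := le_abs_self Cq
    have := abs_nonneg Cf; have := abs_nonneg CB; have := abs_nonneg Cp
    simp only [hR0]; linarith
  set L : ℝ := 2 * R0 ^ 2 + R0 + 1 with hL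
  have hLn : 0 ≤ L := by positivity
  have key : ∀ ε : ℝ, 0 < ε → ∀ x ∈ Icc a b,
      f x ≤ B x + ε * Real.exp (L * (x - a)) := by
    intro ε hε
    have hEd : ∀ x : ℝ, HasDerivAt (fun y => ε * Real.exp (L * (y - a)))
        (ε * (L * Real.exp (L * (x - a)))) x := by
      intro x
      have h1 : HasDerivAt (fun y : ℝ => L * (y - a)) L x := by
        simpa using ((hasDerivAt_id x).sub_const a).const_mul L
      have h2 := (Real.hasDerivAt_exp (L * (x - a))).comp x h1
      have h3 := h2.const_mul ε
      exact h3.congr_deriv (by ring)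
    have := image_le_of_deriv_right_lt_deriv_boundary' hf hfd
      (B := fun x => B x + ε * Real.exp (L * (x - a)))
      (B' := fun x => B' x + ε * (L * Real.exp (L * (x - a))))
      (by simp only [sub_self, mul_zero, Real.exp_zero, mul_one]; linarith)
      (hB.add (Continuous.continuousOn (by fun_prop)))
      (fun x hx => (hBd x hx).add (hEd x).hasDerivWithinAt)
      ?_
    · exact fun x hx => this hx
    · intro x hx hcontact
      have hxI : x ∈ Icc a b := Ico_subset_Icc_self hx
      have hE0 : 0 < Real.exp (L * (x - a)) := Real.exp_pos _
      have h1 := hfle x hx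
      have h2 := hBge x hx
      have hfx := hRf x hxI
      have hBx := hRB x hxI
      have hpx := hRp x hxI
      have hqx := hRq x hxI
      have habs : p x + q x * (f x + B x) ≤ 2 * R0 ^ 2 + R0 := by
        have h3 : p x ≤ R0 := le_of_abs_le hpx
        have h4 : q x * (f x + B x) ≤ |q x * (f x + B x)| := le_abs_self _
        have h5 : |q x * (f x + B x)| = |q x| * |f x + B x| := abs_mul _ _
        have h6 : |f x + B x| ≤ 2 * R0 := (abs_add_le _ _).trans (by linarith)
        have h7 : |q x| * |f x + B x| ≤ R0 * (2 * R0) :=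
          mul_le_mul hqx h6 (abs_nonneg _) hR0n
        nlinarith
      have hd : f x - B x = ε * Real.exp (L * (x - a)) := by
        beta_reduce at hcontact; linarith [hcontact]
      have hview : p x * f x + r x + q x * f x ^ 2
          - (p x * B x + r x + q x * B x ^ 2)
          = (f x - B x) * (p x + q x * (f x + B x)) := by ring
      have h7 : (f x - B x) * (p x + q x * (f x + B x))
          ≤ ε * Real.exp (L * (x - a)) * (2 * R0 ^ 2 + R0) := by
        rw [hd]
        exact mul_le_mul_of_nonneg_left habs (by positivity)
      have h8 : ε * Real.exp (L * (x - a)) * (2 * R0 ^ 2 + R0)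
          < ε * (L * Real.exp (L * (x - a))) := by
        have h9 : ε * (L * Real.exp (L * (x - a)))
            - ε * Real.exp (L * (x - a)) * (2 * R0 ^ 2 + R0)
            = ε * Real.exp (L * (x - a)) := by rw [hL]; ring
        have := mul_pos hε hE0
        linarith
      show f' x < B' x + ε * (L * Real.exp (L * (x - a)))
      linarith
  intro x hx
  by_contra hlt
  push_neg at hlt
  set ε : ℝ := (f x - B x) / (2 * Real.exp (L * (b - a))) with hεdef
  have hε : 0 < ε := div_pos (by linarith) (by positivity)
  have h1 := key ε hε x hx
  have h2 : Real.exp (L * (x - a)) ≤ Real.exp (L * (b - a)) :=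
    Real.exp_le_exp.2 (mul_le_mul_of_nonneg_left (by linarith [hx.2]) hLn)
  have h3 : ε * Real.exp (L * (x - a)) ≤ ε * Real.exp (L * (b - a)) :=
    mul_le_mul_of_nonneg_left h2 hε.le
  have h4 : ε * Real.exp (L * (b - a)) = (f x - B x) / 2 := by
    rw [hεdef]
    field_simp
  linarith

lemma kf_facts {T : ℝ} {F : ℝ → ℝ → ℝ} (hFc : Continuous fun p : ℝ × ℝ => F p.1 p.2)
    {k : ℝ → ℝ} {tb : EReal}
    (hcont : ContinuousOn k {t : ℝ | tb < (t : EReal) ∧ t ≤ T})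
    (hode : ∀ t : ℝ, tb < (t : EReal) → t < T → HasDerivAt k (-(F t (k t))) t)
    {S : ℝ} (hS0 : 0 ≤ S) (hS : tb < ((T - S : ℝ) : EReal)) :
    ContinuousOn (fun s => k (T - s)) (Icc 0 S) ∧
    ∀ s ∈ Ico 0 S, HasDerivWithinAt (fun u => k (T - u)) (F (T - s) (k (T - s))) (Ici s) s := by
  have hmap : ∀ s ∈ Icc (0:ℝ) S, (T - s) ∈ {t : ℝ | tb < (t : EReal) ∧ t ≤ T} := by
    intro s hs
    refine ⟨lt_of_lt_of_le hS (EReal.coe_le_coe_iff.2 (by linarith [hs.2])), by linarith [hs.1]⟩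
  have hKc : ContinuousOn (fun s => k (T - s)) (Icc 0 S) :=
    hcont.comp ((continuous_const.sub continuous_id).continuousOn) hmap
  have hint : ∀ s : ℝ, 0 < s → s < S →
      HasDerivAt (fun u => k (T - u)) (F (T - s) (k (T - s))) s := by
    intro s hs0 hsS
    have h1 : tb < ((T - s : ℝ) : EReal) :=
      lt_of_lt_of_le hS (EReal.coe_le_coe_iff.2 (by linarith))
    have h2 : T - s < T := by linarith
    have hg : HasDerivAt (fun u : ℝ => T - u) (-1) s := by
      simpa using (hasDerivAt_id s).const_sub T
    have h3 := (hode (T - s) h1 h2).comp s hg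
    exact h3.congr_deriv (by ring)
  refine ⟨hKc, ?_⟩
  intro s hs
  rcases eq_or_lt_of_le hs.1 with heq | hpos
  · -- s = 0
    subst heq
    have hSpos : 0 < S := hs.2
    have hIoo : Ioo (0:ℝ) S ∈ 𝓝[>] (0:ℝ) := Ioo_mem_nhdsGT_of_mem ⟨le_refl 0, hSpos⟩
    have hderiv : ∀ x ∈ Ioo (0:ℝ) S, deriv (fun u => k (T - u)) x = F (T - x) (k (T - x)) :=
      fun x hx => (hint x hx.1 hx.2).deriv
    have hgc : ContinuousOn (fun x => F (T - x) (k (T - x))) (Icc 0 S) := by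
      have hpair : ContinuousOn (fun x => ((T - x : ℝ), k (T - x))) (Icc 0 S) :=
        ((continuous_const.sub continuous_id).continuousOn).prodMk hKc
      exact hFc.comp_continuousOn hpair
    have hfilter : 𝓝[>] (0:ℝ) = 𝓝[Ioo (0:ℝ) S] (0:ℝ) := by
      rw [nhdsWithin_restrict'' (Ioi (0:ℝ)) hIoo,
        Set.inter_eq_self_of_subset_right Ioo_subset_Ioi_self]
    have hlim' : Tendsto (fun x => deriv (fun u => k (T - u)) x) (𝓝[>] (0:ℝ))
        (𝓝 (F (T - 0) (k (T - 0)))) := by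
      have h1 : Tendsto (fun x => F (T - x) (k (T - x))) (𝓝[>] (0:ℝ))
          (𝓝 (F (T - 0) (k (T - 0)))) := by
        rw [hfilter]
        exact ((hgc 0 ⟨le_refl 0, hS0⟩).mono Ioo_subset_Icc_self).tendsto
      refine Tendsto.congr' ?_ h1
      exact Filter.eventuallyEq_of_mem hIoo (fun x hx => (hderiv x hx).symm)
    exact hasDerivWithinAt_Ici_of_tendsto_deriv
      (fun x hx => (hint x hx.1 hx.2).differentiableAt.differentiableWithinAt)
      ((hKc 0 ⟨le_refl 0, hS0⟩).mono Ioo_subset_Icc_self)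
      hIoo hlim'
  · exact (hint s hpos hs.2).hasDerivWithinAt
lemma riccati_trap {T β : ℝ} (hT : 0 < T) (hβ : 0 < β) {P R Qρ Qb : ℝ → ℝ}
    (hPc : Continuous P) (hRc : Continuous R) (hQρc : Continuous Qρ)
    (hRβ : ∀ t : ℝ, t ≤ T → β ≤ R t)
    (hQle : ∀ t ∈ Icc (0:ℝ) T, Qρ t ≤ Qb t)
    {nA nB nC : ℝ}
    (hnA : ∀ t ∈ Icc (0:ℝ) T, |P t| ≤ nA) (hnB : ∀ t ∈ Icc (0:ℝ) T, |R t| ≤ nB)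
    (hnC : ∀ t ∈ Icc (0:ℝ) T, |Qb t| ≤ nC)
    (hnA0 : 0 ≤ nA) (hnB0 : 0 < nB) (hnC0 : 0 ≤ nC)
    (h5a : 4 * nB * nC ≤ nA ^ 2) (h5b : nA * T < 2)
    {k : ℝ → ℝ} {tb : EReal}
    (hterm : k T = 0)
    (hcont : ContinuousOn k {t : ℝ | tb < (t : EReal) ∧ t ≤ T})
    (hode : ∀ t : ℝ, tb < (t : EReal) → t < T →
      HasDerivAt k (-(P t * k t + R t + Qρ t * k t ^ 2)) t) :
    (∀ t0 : ℝ, tb < (t0 : EReal) → t0 ≤ T → 0 ≤ k t0) ∧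
    (∀ t0 : ℝ, tb < (t0 : EReal) → 0 ≤ t0 → t0 ≤ T →
      k t0 ≤ nB * T / (1 - nA * T / 2)) := by
  have hFc : Continuous fun p : ℝ × ℝ => P p.1 * p.2 + R p.1 + Qρ p.1 * p.2 ^ 2 := by
    fun_prop
  -- Part 1 : nonnegativity
  have part1 : ∀ t0 : ℝ, tb < (t0 : EReal) → t0 ≤ T → 0 ≤ k t0 := by
    intro t0 htb ht0
    have hS0 : (0:ℝ) ≤ T - t0 := by linarith
    have hS : tb < ((T - (T - t0) : ℝ) : EReal) := by
      rw [show T - (T - t0) = t0 by ring]; exact htb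
    obtain ⟨hKc, hKd⟩ := kf_facts (F := fun t y => P t * y + R t + Qρ t * y ^ 2)
      hFc hcont hode hS0 hS
    have := riccati_comp (a := 0) (b := T - t0)
      (f := fun _ => (0:ℝ)) (f' := fun _ => (0:ℝ))
      (B := fun s => k (T - s)) (B' := fun s => P (T - s) * k (T - s) + R (T - s)
        + Qρ (T - s) * k (T - s) ^ 2)
      (p := fun s => P (T - s)) (q := fun s => Qρ (T - s)) (r := fun s => R (T - s))
      continuousOn_const hKc
      ((hPc.comp (continuous_const.sub continuous_id)).continuousOn)
      ((hQρc.comp (continuous_const.sub continuous_id)).continuousOn)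
      (fun x _ => hasDerivWithinAt_const x _ 0)
      hKd
      (fun x hx => by
        have : β ≤ R (T - x) := hRβ (T - x) (by linarith [hx.1])
        simp only [mul_zero, zero_add, zero_pow, ne_eq, OfNat.ofNat_ne_zero,
          not_false_eq_true, add_zero]
        nlinarith)
      (fun x _ => le_refl _)
      (by simp [hterm])
    have h' : (0:ℝ) ≤ k (T - (T - t0)) := this (T - t0) ⟨hS0, le_refl _⟩
    rwa [show T - (T - t0) = t0 by ring] at h'
  refine ⟨part1, ?_⟩
  -- the barrier function
  set d0 : ℝ := 1 - nA * T / 2 with hd0def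
  have hd0 : 0 < d0 := by simp only [hd0def]; linarith
  have hDpos : ∀ s ∈ Icc (0:ℝ) T, 0 < 1 - nA * s / 2 := by
    intro s hs
    have : nA * s ≤ nA * T := mul_le_mul_of_nonneg_left hs.2 hnA0
    simp only [hd0def] at hd0; linarith
  have hψc : ContinuousOn (fun s => nB * s / (1 - nA * s / 2)) (Icc 0 T) :=
    ContinuousOn.div (by fun_prop) (by fun_prop) (fun s hs => (hDpos s hs).ne')
  have hψd : ∀ s ∈ Icc (0:ℝ) T,
      HasDerivAt (fun u => nB * u / (1 - nA * u / 2)) (nB / (1 - nA * s / 2) ^ 2) s := by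
    intro s hs
    have h1 : HasDerivAt (fun u : ℝ => nB * u) nB s := by
      simpa using (hasDerivAt_id s).const_mul nB
    have h2 : HasDerivAt (fun u : ℝ => 1 - nA * u / 2) (-(nA / 2)) s := by
      have := (((hasDerivAt_id s).const_mul nA).div_const 2).const_sub 1
      exact this.congr_deriv (by ring)
    have h3 := h1.div h2 (hDpos s hs).ne'
    have hnum : nB * (1 - nA * s / 2) - nB * s * -(nA / 2) = nB := by ring
    rw [hnum] at h3
    exact h3
  have hψsup : ∀ s ∈ Icc (0:ℝ) T,
      nA * (nB * s / (1 - nA * s / 2)) + nB + nC * (nB * s / (1 - nA * s / 2)) ^ 2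
        ≤ nB / (1 - nA * s / 2) ^ 2 := by
    intro s hs
    have hD := hDpos s hs
    rw [le_div_iff₀ (by positivity)]
    have hkey : 0 ≤ nB * s ^ 2 * (nA ^ 2 - 4 * nB * nC) :=
      mul_nonneg (mul_nonneg hnB0.le (sq_nonneg s)) (by linarith)
    have hexp : (nA * (nB * s / (1 - nA * s / 2)) + nB
        + nC * (nB * s / (1 - nA * s / 2)) ^ 2) * (1 - nA * s / 2) ^ 2
        = nA * nB * s * (1 - nA * s / 2) + nB * (1 - nA * s / 2) ^ 2
          + nC * nB ^ 2 * s ^ 2 := by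
      have hne : (1 - nA * s / 2) ≠ 0 := hD.ne'
      have hne2 : (2 - nA * s) ≠ 0 := by intro hh; apply hne; linarith
      have hne3 : (4 - nA * s * 4 + nA ^ 2 * s ^ 2) ≠ 0 := by
        have : 4 - nA * s * 4 + nA ^ 2 * s ^ 2 = (2 - nA * s) ^ 2 := by ring
        rw [this]; exact pow_ne_zero 2 hne2
      field_simp
    rw [hexp]
    nlinarith
  have hψM : ∀ s ∈ Icc (0:ℝ) T, nB * s / (1 - nA * s / 2) ≤ nB * T / d0 := by
    intro s hs
    have hD := hDpos s hs
    have h1 : nB * s ≤ nB * T := mul_le_mul_of_nonneg_left hs.2 hnB0.le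
    have h2 : d0 ≤ 1 - nA * s / 2 := by
      have : nA * s ≤ nA * T := mul_le_mul_of_nonneg_left hs.2 hnA0
      simp only [hd0def]; linarith
    rw [div_le_div_iff₀ (by linarith) hd0]
    exact mul_le_mul h1 h2 hd0.le (le_trans (mul_nonneg hnB0.le hs.1) h1)
  -- Part 2 : upper bound
  intro t0 htb ht00 ht0T
  have hS0 : (0:ℝ) ≤ T - t0 := by linarith
  have hS : tb < ((T - (T - t0) : ℝ) : EReal) := by
    rw [show T - (T - t0) = t0 by ring]; exact htb
  obtain ⟨hKc, hKd⟩ := kf_facts (F := fun t y => P t * y + R t + Qρ t * y ^ 2)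
    hFc hcont hode hS0 hS
  have hsub : Icc (0:ℝ) (T - t0) ⊆ Icc (0:ℝ) T := Icc_subset_Icc (le_refl _) (by linarith)
  have key := riccati_comp (a := 0) (b := T - t0)
    (f := fun s => k (T - s))
    (f' := fun s => P (T - s) * k (T - s) + R (T - s) + Qρ (T - s) * k (T - s) ^ 2)
    (B := fun s => nB * s / (1 - nA * s / 2))
    (B' := fun s => nB / (1 - nA * s / 2) ^ 2)
    (p := fun _ => nA) (q := fun _ => nC) (r := fun _ => nB)
    hKc (hψc.mono hsub) continuousOn_const continuousOn_const
    hKd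
    (fun s hs => (hψd s (hsub (Ico_subset_Icc_self hs))).hasDerivWithinAt)
    (fun s hs => by
      have hsIcc : (T - s) ∈ Icc (0:ℝ) T := ⟨by linarith [hs.2], by linarith [hs.1]⟩
      have hk0 : 0 ≤ k (T - s) := by
        apply part1 (T - s) ?_ (by linarith [hs.1])
        exact lt_of_lt_of_le hS (EReal.coe_le_coe_iff.2 (by linarith [hs.2]))
      have h1 : P (T - s) * k (T - s) ≤ nA * k (T - s) :=
        mul_le_mul_of_nonneg_right ((le_abs_self _).trans (hnA _ hsIcc)) hk0
      have h2 : R (T - s) ≤ nB := (le_abs_self _).trans (hnB _ hsIcc)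
      have h3 : Qρ (T - s) * k (T - s) ^ 2 ≤ nC * k (T - s) ^ 2 :=
        mul_le_mul_of_nonneg_right
          ((hQle _ hsIcc).trans ((le_abs_self _).trans (hnC _ hsIcc))) (sq_nonneg _)
      show P (T - s) * k (T - s) + R (T - s) + Qρ (T - s) * k (T - s) ^ 2
        ≤ nA * k (T - s) + nB + nC * k (T - s) ^ 2
      linarith)
    (fun s hs => hψsup s (hsub (Ico_subset_Icc_self hs)))
    (by simp [hterm])
  have h' : k (T - (T - t0)) ≤ nB * (T - t0) / (1 - nA * (T - t0) / 2) :=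
    key (T - t0) ⟨hS0, le_refl _⟩
  rw [show T - (T - t0) = t0 by ring] at h'
  exact h'.trans (hψM (T - t0) ⟨hS0, by linarith⟩)

/-- Right-hand side of the scalar Riccati equation `−k̇ = ricS ρ t k`. -/
noncomputable def ricS (H11 H13 H14 H21 H22 H33 H44 Hb22 : ℝ → ℝ)
    (ρ t k : ℝ) : ℝ :=
  (2 * H21 t + (H13 t) ^ 2 + (H14 t) ^ 2) * k + H11 t
    + (H22 t - ρ * Hb22 t - H33 t * (H13 t) ^ 2 - H44 t * (H14 t) ^ 2) * k ^ 2

/-- under Assumption (H5), `t^k_{ρ_b} < 0`, so `k_·(ρ_b)` exists on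
all of `[0,T]`; and for each `ρ ∈ (0, ρ_b]`, `k_·(ρ)` exists on `[0,T]` with
`0 ≤ k_t(ρ) ≤ k_t(ρ_b)`. -/
theorem stmt_19
    (T β : ℝ) (hT : 0 < T) (hβ : 0 < β)
    (H11 H12 H13 H14 H21 H22 H33 H44 Hb22 : ℝ → ℝ)
    (hc11 : Continuous H11) (hc12 : Continuous H12) (hc13 : Continuous H13)
    (hc14 : Continuous H14) (hc21 : Continuous H21) (hc22 : Continuous H22)
    (hc33 : Continuous H33) (hc44 : Continuous H44) (hcb22 : Continuous Hb22)
    (hconst : ∀ t : ℝ, t ≤ 0 → H11 t = H11 0 ∧ H12 t = H12 0 ∧ H13 t = H13 0 ∧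
      H14 t = H14 0 ∧ H21 t = H21 0 ∧ H22 t = H22 0 ∧ H33 t = H33 0 ∧
      H44 t = H44 0 ∧ Hb22 t = Hb22 0)
    (hbound : ∀ t : ℝ, t ≤ T → β ≤ H11 t ∧ H22 t ≤ -β ∧ H33 t ≤ -β ∧
      H44 t ≤ -β ∧ Hb22 t < 0)
    (k : ℝ → ℝ → ℝ) (tb : ℝ → EReal)
    (htbT : ∀ ρ : ℝ, tb ρ < (T : EReal))
    (hterm : ∀ ρ : ℝ, k ρ T = 0)
    (hcont : ∀ ρ : ℝ, ContinuousOn (k ρ) {t : ℝ | tb ρ < (t : EReal) ∧ t ≤ T})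
    (hode : ∀ ρ t : ℝ, tb ρ < (t : EReal) → t < T →
      HasDerivAt (k ρ) (-(ricS H11 H13 H14 H21 H22 H33 H44 Hb22 ρ t (k ρ t))) t)
    (hblow : ∀ ρ : ℝ, ⊥ < tb ρ →
      Tendsto (fun t => |k ρ t|) (nhdsWithin (tb ρ).toReal (Set.Ioi (tb ρ).toReal)) atTop)
    (ρb : ℝ)
    (hρb : ρb = sInf ((fun t => H22 t - H33 t * (H13 t) ^ 2 - H44 t * (H14 t) ^ 2) ''
        Set.Icc (0 : ℝ) T) / sSup (Hb22 '' Set.Icc (0 : ℝ) T))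
    (hH5a : 4 * sSup ((fun t => |H11 t|) '' Set.Icc (0 : ℝ) T) *
        sSup ((fun t => |H22 t - ρb * Hb22 t - H33 t * (H13 t) ^ 2 - H44 t * (H14 t) ^ 2|) ''
          Set.Icc (0 : ℝ) T)
      ≤ (sSup ((fun t => |2 * H21 t + (H13 t) ^ 2 + (H14 t) ^ 2|) '' Set.Icc (0 : ℝ) T)) ^ 2)
    (hH5b : (sSup ((fun t => |2 * H21 t + (H13 t) ^ 2 + (H14 t) ^ 2|) '' Set.Icc (0 : ℝ) T)) ^ 2
      < 4 / T ^ 2) :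
    tb ρb < ((0 : ℝ) : EReal) ∧
    ∀ ρ : ℝ, 0 < ρ → ρ ≤ ρb →
      tb ρ < ((0 : ℝ) : EReal) ∧
      ∀ t ∈ Set.Icc (0 : ℝ) T, 0 ≤ k ρ t ∧ k ρ t ≤ k ρb t := by
  
  classical
  set nB := sSup ((fun t => |H11 t|) '' Set.Icc (0 : ℝ) T) with hnBdef
  set nC := sSup ((fun t => |H22 t - ρb * Hb22 t - H33 t * (H13 t) ^ 2 -
    H44 t * (H14 t) ^ 2|) '' Set.Icc (0 : ℝ) T) with hnCdef
  set nA := sSup ((fun t => |2 * H21 t + (H13 t) ^ 2 + (H14 t) ^ 2|) ''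
    Set.Icc (0 : ℝ) T) with hnAdef
  have hPc : Continuous fun t : ℝ => 2 * H21 t + H13 t ^ 2 + H14 t ^ 2 := by fun_prop
  have hQc : ∀ ρ : ℝ, Continuous fun t : ℝ =>
      H22 t - ρ * Hb22 t - H33 t * H13 t ^ 2 - H44 t * H14 t ^ 2 := fun ρ => by fun_prop
  have h0T : (0:ℝ) ∈ Icc (0:ℝ) T := ⟨le_refl 0, hT.le⟩
  have hAub : ∀ t ∈ Icc (0:ℝ) T, |2 * H21 t + H13 t ^ 2 + H14 t ^ 2| ≤ nA := by
    intro t ht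
    rw [hnAdef]
    exact le_csSup (isCompact_Icc.image hPc.abs).bddAbove (mem_image_of_mem _ ht)
  have hBub : ∀ t ∈ Icc (0:ℝ) T, |H11 t| ≤ nB := by
    intro t ht
    rw [hnBdef]
    exact le_csSup (isCompact_Icc.image hc11.abs).bddAbove (mem_image_of_mem _ ht)
  have hCub : ∀ t ∈ Icc (0:ℝ) T,
      |H22 t - ρb * Hb22 t - H33 t * H13 t ^ 2 - H44 t * H14 t ^ 2| ≤ nC := by
    intro t ht
    rw [hnCdef]
    exact le_csSup (isCompact_Icc.image (hQc ρb).abs).bddAbove (mem_image_of_mem _ ht)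
  have hA0 : 0 ≤ nA := (abs_nonneg _).trans (hAub 0 h0T)
  have hB0 : 0 < nB :=
    lt_of_lt_of_le hβ (((hbound 0 hT.le).1.trans (le_abs_self _)).trans (hBub 0 h0T))
  have hC0 : 0 ≤ nC := (abs_nonneg _).trans (hCub 0 h0T)
  have h5a' : 4 * nB * nC ≤ nA ^ 2 := hH5a
  have h5b' : nA * T < 2 := by
    have hT2 : (0:ℝ) < T ^ 2 := by positivity
    have h1 : nA ^ 2 * T ^ 2 < 4 := by
      have h2 := (lt_div_iff₀ hT2).1 hH5b
      linarith
    nlinarith [mul_nonneg hA0 hT.le]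
  have hQle : ∀ ρ : ℝ, ρ ≤ ρb → ∀ t ∈ Icc (0:ℝ) T,
      H22 t - ρ * Hb22 t - H33 t * H13 t ^ 2 - H44 t * H14 t ^ 2
        ≤ H22 t - ρb * Hb22 t - H33 t * H13 t ^ 2 - H44 t * H14 t ^ 2 := by
    intro ρ hρ t ht
    have hb := (hbound t ht.2).2.2.2.2
    have h1 : (ρb - ρ) * Hb22 t ≤ 0 :=
      mul_nonpos_of_nonneg_of_nonpos (sub_nonneg.2 hρ) hb.le
    nlinarith [h1]
  have htrap : ∀ ρ : ℝ, ρ ≤ ρb →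
      (∀ t0 : ℝ, tb ρ < (t0 : EReal) → t0 ≤ T → 0 ≤ k ρ t0) ∧
      (∀ t0 : ℝ, tb ρ < (t0 : EReal) → 0 ≤ t0 → t0 ≤ T →
        k ρ t0 ≤ nB * T / (1 - nA * T / 2)) := by
    intro ρ hρ
    exact riccati_trap hT hβ
      (P := fun t => 2 * H21 t + H13 t ^ 2 + H14 t ^ 2) (R := H11)
      (Qρ := fun t => H22 t - ρ * Hb22 t - H33 t * H13 t ^ 2 - H44 t * H14 t ^ 2)
      (Qb := fun t => H22 t - ρb * Hb22 t - H33 t * H13 t ^ 2 - H44 t * H14 t ^ 2)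
      hPc hc11 (hQc ρ)
      (fun t ht => (hbound t ht).1) (hQle ρ hρ)
      hAub hBub hCub hA0 hB0 hC0 h5a' h5b' (hterm ρ) (hcont ρ)
      (fun t h1 h2 => by simpa [ricS] using hode ρ t h1 h2)
  have htb0 : ∀ ρ : ℝ, ρ ≤ ρb → tb ρ < ((0:ℝ) : EReal) := by
    intro ρ hρ
    by_contra hcon
    push_neg at hcon
    have hbot : (⊥ : EReal) < tb ρ := lt_of_lt_of_le (EReal.bot_lt_coe 0) hcon
    have hne_top : tb ρ ≠ ⊤ := ((htbT ρ).trans (EReal.coe_lt_top T)).ne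
    have hco : (((tb ρ).toReal : ℝ) : EReal) = tb ρ := EReal.coe_toReal hne_top hbot.ne'
    have hr0T : (tb ρ).toReal < T := by
      rw [← EReal.coe_lt_coe_iff, hco]; exact htbT ρ
    have hr00 : (0:ℝ) ≤ (tb ρ).toReal := by
      rw [← EReal.coe_le_coe_iff, hco]; exact hcon
    have hev1 := (hblow ρ hbot).eventually_gt_atTop (nB * T / (1 - nA * T / 2))
    have hev2 : ∀ᶠ t in 𝓝[>] (tb ρ).toReal, t < T :=
      mem_nhdsWithin_of_mem_nhds (Iio_mem_nhds hr0T)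
    have hev3 : ∀ᶠ t in 𝓝[>] (tb ρ).toReal, (tb ρ).toReal < t := self_mem_nhdsWithin
    obtain ⟨t1, hM1, ht1T, ht1r⟩ := (hev1.and (hev2.and hev3)).exists
    have htb1 : tb ρ < (t1 : EReal) := by
      rw [← hco]; exact EReal.coe_lt_coe_iff.2 ht1r
    have h01 : (0:ℝ) ≤ t1 := hr00.trans ht1r.le
    obtain ⟨hnn, hub⟩ := htrap ρ hρ
    have h1 := hnn t1 htb1 ht1T.le
    have h2 := hub t1 htb1 h01 ht1T.le
    rw [abs_of_nonneg h1] at hM1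
    exact absurd h2 (not_le.2 hM1)
  refine ⟨htb0 ρb (le_refl _), ?_⟩
  intro ρ hρ0 hρle
  refine ⟨htb0 ρ hρle, ?_⟩
  intro t ht
  have htbρ : tb ρ < (t : EReal) :=
    lt_of_lt_of_le (htb0 ρ hρle) (EReal.coe_le_coe_iff.2 ht.1)
  have htbρb : tb ρb < (t : EReal) :=
    lt_of_lt_of_le (htb0 ρb (le_refl _)) (EReal.coe_le_coe_iff.2 ht.1)
  have hnn := (htrap ρ hρle).1 t htbρ ht.2
  refine ⟨hnn, ?_⟩
  have hS0 : (0:ℝ) ≤ T - t := by linarith [ht.2]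
  have hSρ : tb ρ < ((T - (T - t) : ℝ) : EReal) := by
    rw [show T - (T - t) = t by ring]; exact htbρ
  have hSρb : tb ρb < ((T - (T - t) : ℝ) : EReal) := by
    rw [show T - (T - t) = t by ring]; exact htbρb
  have hFc : ∀ ρ' : ℝ, Continuous fun p : ℝ × ℝ =>
      (2 * H21 p.1 + H13 p.1 ^ 2 + H14 p.1 ^ 2) * p.2 + H11 p.1
        + (H22 p.1 - ρ' * Hb22 p.1 - H33 p.1 * H13 p.1 ^ 2 - H44 p.1 * H14 p.1 ^ 2) * p.2 ^ 2 :=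
    fun ρ' => by fun_prop
  obtain ⟨hKc1, hKd1⟩ := kf_facts
    (F := fun t' y => (2 * H21 t' + H13 t' ^ 2 + H14 t' ^ 2) * y + H11 t'
      + (H22 t' - ρ * Hb22 t' - H33 t' * H13 t' ^ 2 - H44 t' * H14 t' ^ 2) * y ^ 2)
    (hFc ρ) (hcont ρ)
    (fun t' h1 h2 => by simpa [ricS] using hode ρ t' h1 h2) hS0 hSρ
  obtain ⟨hKc2, hKd2⟩ := kf_facts
    (F := fun t' y => (2 * H21 t' + H13 t' ^ 2 + H14 t' ^ 2) * y + H11 t'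
      + (H22 t' - ρb * Hb22 t' - H33 t' * H13 t' ^ 2 - H44 t' * H14 t' ^ 2) * y ^ 2)
    (hFc ρb) (hcont ρb)
    (fun t' h1 h2 => by simpa [ricS] using hode ρb t' h1 h2) hS0 hSρb
  have hcomp := riccati_comp (a := 0) (b := T - t)
    (f := fun s => k ρ (T - s))
    (f' := fun s => (2 * H21 (T - s) + H13 (T - s) ^ 2 + H14 (T - s) ^ 2) * k ρ (T - s)
      + H11 (T - s) + (H22 (T - s) - ρ * Hb22 (T - s) - H33 (T - s) * H13 (T - s) ^ 2
        - H44 (T - s) * H14 (T - s) ^ 2) * k ρ (T - s) ^ 2)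
    (B := fun s => k ρb (T - s))
    (B' := fun s => (2 * H21 (T - s) + H13 (T - s) ^ 2 + H14 (T - s) ^ 2) * k ρb (T - s)
      + H11 (T - s) + (H22 (T - s) - ρb * Hb22 (T - s) - H33 (T - s) * H13 (T - s) ^ 2
        - H44 (T - s) * H14 (T - s) ^ 2) * k ρb (T - s) ^ 2)
    (p := fun s => 2 * H21 (T - s) + H13 (T - s) ^ 2 + H14 (T - s) ^ 2)
    (q := fun s => H22 (T - s) - ρb * Hb22 (T - s) - H33 (T - s) * H13 (T - s) ^ 2
      - H44 (T - s) * H14 (T - s) ^ 2)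
    (r := fun s => H11 (T - s))
    hKc1 hKc2
    ((hPc.comp (continuous_const.sub continuous_id)).continuousOn)
    (((hQc ρb).comp (continuous_const.sub continuous_id)).continuousOn)
    hKd1 hKd2
    (fun s hs => by
      have hsub : (T - s) ∈ Icc (0:ℝ) T := ⟨by linarith [hs.2, ht.1], by linarith [hs.1]⟩
      have hk0 : 0 ≤ k ρ (T - s) := by
        apply (htrap ρ hρle).1 (T - s) ?_ (by linarith [hs.1])
        exact lt_of_lt_of_le hSρ (EReal.coe_le_coe_iff.2 (by linarith [hs.2]))
      have hq := hQle ρ hρle (T - s) hsub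
      have h3 : (H22 (T - s) - ρ * Hb22 (T - s) - H33 (T - s) * H13 (T - s) ^ 2
            - H44 (T - s) * H14 (T - s) ^ 2) * k ρ (T - s) ^ 2
          ≤ (H22 (T - s) - ρb * Hb22 (T - s) - H33 (T - s) * H13 (T - s) ^ 2
            - H44 (T - s) * H14 (T - s) ^ 2) * k ρ (T - s) ^ 2 :=
        mul_le_mul_of_nonneg_right hq (sq_nonneg _)
      show (2 * H21 (T - s) + H13 (T - s) ^ 2 + H14 (T - s) ^ 2) * k ρ (T - s)
          + H11 (T - s) + (H22 (T - s) - ρ * Hb22 (T - s) - H33 (T - s) * H13 (T - s) ^ 2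
            - H44 (T - s) * H14 (T - s) ^ 2) * k ρ (T - s) ^ 2
        ≤ (2 * H21 (T - s) + H13 (T - s) ^ 2 + H14 (T - s) ^ 2) * k ρ (T - s)
          + H11 (T - s) + (H22 (T - s) - ρb * Hb22 (T - s) - H33 (T - s) * H13 (T - s) ^ 2
            - H44 (T - s) * H14 (T - s) ^ 2) * k ρ (T - s) ^ 2
      linarith)
    (fun s hs => le_refl _)
    (by simp [hterm])
  have h' : k ρ (T - (T - t)) ≤ k ρb (T - (T - t)) := hcomp (T - t) ⟨hS0, le_refl _⟩
  rwa [show T - (T - t) = t by ring] at h'
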